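/- In the graded quotient ring $R = \mathbb{Q}[y_1, y_{12}, y_{123}]/(y_1^2 + y_{12}^2 + y_{123}^2 - y_1 y_{12} - y_{12} y_{123},\; y_{12}^3 - 2 y_1 y_{12}^2 + 2 y_1^2 y_{12},\; y_1^4)$, the Hilbert series is $1 + 3t + 5t^2 + 6t^3 + 5t^4 + 3t^5 + t^6$ (each variable in degree 1); in particular $R$ has total dimension $24$ over $\mathbb{Q}$. -/

import Mathlib

open MvPolynomial

/-- The ideal of relations (iv): `y₁²+y₁₂²+y₁₂₃²-y₁y₁₂-y₁₂y₁₂₃`,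
`y₁₂³-2y₁y₁₂²+2y₁²y₁₂`, `y₁⁴`, where `y₁ = X 0`, `y₁₂ = X 1`, `y₁₂₃ = X 2`. -/
noncomputable def flagRelIdeal : Ideal (MvPolynomial (Fin 3) ℚ) :=
  Ideal.span
    { X 0 ^ 2 + X 1 ^ 2 + X 2 ^ 2 - X 0 * X 1 - X 1 * X 2,
      X 1 ^ 3 - 2 * X 0 * X 1 ^ 2 + 2 * X 0 ^ 2 * X 1,
      X 0 ^ 4 }


open AdjoinRoot
noncomputable section
open scoped Polynomial

lemma nontrivial_adjoinRoot {R : Type*} [CommRing R] [Nontrivial R] {f : R[X]} (hf : f.Monic)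
    (h : f.natDegree ≠ 0) : Nontrivial (AdjoinRoot f) := by
  refine ⟨⟨1, 0, fun h10 => ?_⟩⟩
  have hdvd : f ∣ 1 := by
    rwa [show (1 : AdjoinRoot f) = AdjoinRoot.mk f 1 from (map_one _).symm,
      AdjoinRoot.mk_eq_zero] at h10
  obtain ⟨c, hc⟩ := hdvd
  have hc0 : c ≠ 0 := fun h0 => by simp [h0] at hc
  have h2 := hf.natDegree_mul' hc0
  rw [← hc, Polynomial.natDegree_one] at *
  omega

def q0 : Polynomial ℚ := Polynomial.X ^ 4
def B0 := AdjoinRoot q0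
instance : CommRing B0 := AdjoinRoot.instCommRing _
instance : Algebra ℚ B0 := by unfold B0; infer_instance
def a0 : B0 := root q0
lemma hq0 : q0.Monic := by unfold q0; monicity!
lemma ndq0 : q0.natDegree = 4 := by
  unfold q0; compute_degree!
instance : Nontrivial B0 := nontrivial_adjoinRoot hq0 (by rw [ndq0]; norm_num)
def q1 : Polynomial B0 := Polynomial.X^3 - 2*Polynomial.C a0*Polynomial.X^2 + 2*Polynomial.C a0^2*Polynomial.X
def B1 := AdjoinRoot q1
instance : CommRing B1 := AdjoinRoot.instCommRing _
instance : Algebra ℚ B1 := by unfold B1; infer_instance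
instance : Algebra B0 B1 := by unfold B1; infer_instance
instance : IsScalarTower ℚ B0 B1 := by unfold B1; infer_instance
def a1 : B1 := root q1
def x1 : B1 := of q1 a0
lemma hq1 : q1.Monic := by unfold q1; monicity!
lemma ndq1 : q1.natDegree = 3 := by
  unfold q1; compute_degree!
instance : Nontrivial B1 := nontrivial_adjoinRoot hq1 (by rw [ndq1]; norm_num)
def q2 : Polynomial B1 := Polynomial.X^2 - Polynomial.C a1*Polynomial.X + Polynomial.C (x1^2 + a1^2 - x1*a1)
def B2 := AdjoinRoot q2
instance : CommRing B2 := AdjoinRoot.instCommRing _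
instance : Algebra ℚ B2 := by unfold B2; infer_instance
instance : Algebra B1 B2 := by unfold B2; infer_instance
instance : Algebra B0 B2 := by unfold B2; infer_instance
instance : IsScalarTower ℚ B1 B2 := by unfold B2; infer_instance
instance : IsScalarTower ℚ B0 B2 := by unfold B2; infer_instance
instance : IsScalarTower B0 B1 B2 := by unfold B2; infer_instance
lemma hq2 : q2.Monic := by unfold q2; monicity!
lemma ndq2 : q2.natDegree = 2 := by
  unfold q2; compute_degree!
instance : Nontrivial B2 := nontrivial_adjoinRoot hq2 (by rw [ndq2]; norm_num)

def x2 : B2 := of q2 x1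
def y2 : B2 := of q2 a1
def z2 : B2 := root q2

lemma rel0 : a0 ^ 4 = 0 := by
  have h := AdjoinRoot.mk_self (f := q0)
  simp only [q0, map_pow, AdjoinRoot.mk_X] at h
  exact h

lemma rel1 : a1^3 - 2*x1*a1^2 + 2*x1^2*a1 = 0 := by
  have h := AdjoinRoot.mk_self (f := q1)
  simp only [q1, map_add, map_sub, map_mul, map_pow, map_ofNat, AdjoinRoot.mk_X,
    AdjoinRoot.mk_C] at h
  exact h

lemma rel2 : z2^2 - y2*z2 + (x2^2 + y2^2 - x2*y2) = 0 := by
  have h := AdjoinRoot.mk_self (f := q2)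
  simp only [q2, map_add, map_sub, map_mul, map_pow, AdjoinRoot.mk_X, AdjoinRoot.mk_C] at h
  have key : ∀ p : Polynomial B1, p = q2 → Polynomial.eval₂ (of q2) (root q2) p = 0 :=
    fun p hp => hp ▸ AdjoinRoot.eval₂_root q2
  have h' := key (Polynomial.X^2 - Polynomial.C a1*Polynomial.X + Polynomial.C (x1^2 + a1^2 - x1*a1)) rfl
  simp only [map_add, map_sub, map_mul, map_pow, Polynomial.eval₂_add, Polynomial.eval₂_sub, Polynomial.eval₂_mul,
    Polynomial.eval₂_pow, Polynomial.eval₂_X, Polynomial.eval₂_C] at h'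
  exact h'


def ψ0 : MvPolynomial (Fin 3) ℚ →ₐ[ℚ] B2 := MvPolynomial.aeval ![x2, y2, z2]

lemma ψ0_X0 : ψ0 (MvPolynomial.X 0) = x2 := by simp [ψ0]
lemma ψ0_X1 : ψ0 (MvPolynomial.X 1) = y2 := by simp [ψ0]
lemma ψ0_X2 : ψ0 (MvPolynomial.X 2) = z2 := by simp [ψ0]

lemma ker_le : flagRelIdeal ≤ RingHom.ker ψ0 := by
  rw [flagRelIdeal, Ideal.span_le]
  rintro p hp
  simp only [Set.mem_insert_iff, Set.mem_singleton_iff] at hp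
  have hx4 : x2 ^ 4 = 0 := by
    have : x1 ^ 4 = 0 := by
      have := congrArg (of q1) rel0
      simp only [map_pow, map_zero] at this
      exact this
    have := congrArg (of q2) this
    simp only [map_pow, map_zero] at this
    exact this
  have hyrel : y2^3 - 2*x2*y2^2 + 2*x2^2*y2 = 0 := by
    have := congrArg (of q2) rel1
    simp only [map_sub, map_add, map_mul, map_pow, map_zero] at this
    have h2 : (of q2) (2 : B1) = 2 := map_ofNat (of q2) 2
    rw [h2] at this
    exact this
  rcases hp with rfl | rfl | rfl <;>
    simp only [SetLike.mem_coe, RingHom.mem_ker, map_add, map_sub, map_mul, map_pow,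
      map_ofNat, ψ0_X0, ψ0_X1, ψ0_X2] <;>
    [skip; skip; exact hx4]
  · linear_combination rel2
  · linear_combination hyrel

def ψ : (MvPolynomial (Fin 3) ℚ ⧸ flagRelIdeal) →ₐ[ℚ] B2 :=
  Ideal.Quotient.liftₐ flagRelIdeal ψ0 (fun a ha => ker_le ha)

lemma ψ_mk (p : MvPolynomial (Fin 3) ℚ) : ψ (Ideal.Quotient.mkₐ ℚ flagRelIdeal p) = ψ0 p :=
  DFunLike.congr_fun (Ideal.Quotient.liftₐ_comp flagRelIdeal ψ0 (fun a ha => ker_le ha)) p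

def b0 : Module.Basis (Fin 4) ℚ B0 := (AdjoinRoot.powerBasis' hq0).basis.reindex (finCongr ndq0)
def b1 : Module.Basis (Fin 3) B0 B1 := (AdjoinRoot.powerBasis' hq1).basis.reindex (finCongr ndq1)
def b2 : Module.Basis (Fin 2) B1 B2 := (AdjoinRoot.powerBasis' hq2).basis.reindex (finCongr ndq2)

def bB : Module.Basis (Fin 4 × Fin 3 × Fin 2) ℚ B2 := b0.smulTower (b1.smulTower b2)

lemma b0_apply (i : Fin 4) : b0 i = a0 ^ (i : ℕ) := by
  rw [b0]
  erw [Module.Basis.reindex_apply, PowerBasis.basis_eq_pow]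
  rfl

lemma b1_apply (i : Fin 3) : b1 i = a1 ^ (i : ℕ) := by
  rw [b1]
  erw [Module.Basis.reindex_apply, PowerBasis.basis_eq_pow]
  rfl

lemma b2_apply (i : Fin 2) : b2 i = z2 ^ (i : ℕ) := by
  rw [b2]
  erw [Module.Basis.reindex_apply, PowerBasis.basis_eq_pow]
  rfl

lemma bB_apply (t : Fin 4 × Fin 3 × Fin 2) :
    bB t = x2 ^ (t.1 : ℕ) * (y2 ^ (t.2.1 : ℕ) * z2 ^ (t.2.2 : ℕ)) := by
  obtain ⟨i, j, k⟩ := t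
  rw [bB, Module.Basis.smulTower_apply, Module.Basis.smulTower_apply, b0_apply, b1_apply, b2_apply,
    Algebra.smul_def, Algebra.smul_def, IsScalarTower.algebraMap_eq B0 B1 B2]
  simp only [RingHom.comp_apply, AdjoinRoot.algebraMap_eq, map_pow, map_mul]
  rfl

open MvPolynomial

abbrev Rq := MvPolynomial (Fin 3) ℚ ⧸ flagRelIdeal
def πq : MvPolynomial (Fin 3) ℚ →ₐ[ℚ] Rq := Ideal.Quotient.mkₐ ℚ flagRelIdeal
def bmon (i j k : ℕ) : MvPolynomial (Fin 3) ℚ :=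
  MvPolynomial.X 0 ^ i * MvPolynomial.X 1 ^ j * MvPolynomial.X 2 ^ k
def vR (t : Fin 4 × Fin 3 × Fin 2) : Rq := πq (bmon t.1 t.2.1 t.2.2)
def degT (t : Fin 4 × Fin 3 × Fin 2) : ℕ := t.1 + t.2.1 + t.2.2
def Wd (d : ℕ) : Submodule ℚ Rq := Submodule.span ℚ (vR '' {t | degT t = d})

lemma hg1mem : (X 0^2 + X 1^2 + X 2^2 - X 0*X 1 - X 1*X 2 : MvPolynomial (Fin 3) ℚ) ∈
    flagRelIdeal := Ideal.subset_span (by left; rfl)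
lemma hg2mem : (X 1^3 - 2*X 0*X 1^2 + 2*X 0^2*X 1 : MvPolynomial (Fin 3) ℚ) ∈
    flagRelIdeal := Ideal.subset_span (by right; left; rfl)
lemma hg3mem : (X 0^4 : MvPolynomial (Fin 3) ℚ) ∈ flagRelIdeal :=
  Ideal.subset_span (by right; right; rfl)

lemma πq_zero {p : MvPolynomial (Fin 3) ℚ} (hp : p ∈ flagRelIdeal) : πq p = 0 := by
  simpa [πq, Ideal.Quotient.mkₐ_eq_mk] using Ideal.Quotient.eq_zero_iff_mem.mpr hp

lemma ψ_vR (t : Fin 4 × Fin 3 × Fin 2) : ψ (vR t) = bB t := by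
  rw [vR, πq, ψ_mk, bB_apply]
  simp only [ψ0, bmon, map_mul, map_pow, MvPolynomial.aeval_X]
  simp [x2, y2, z2, mul_assoc]

lemma vR_indep : LinearIndependent ℚ vR := by
  have h := bB.linearIndependent
  have he : bB = ⇑ψ.toLinearMap ∘ vR := funext fun t => (ψ_vR t).symm
  rw [he] at h
  exact h.of_comp ψ.toLinearMap

lemma red : ∀ c b a : ℕ, πq (bmon a b c) ∈ Wd (a + b + c) := by
  intro c
  induction c using Nat.strong_induction_on with
  | _ c ihc =>
    intro b
    induction b using Nat.strong_induction_on with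
    | _ b ihb =>
      intro a
      rcases le_or_gt 4 a with ha | ha
      · obtain ⟨a', rfl⟩ := Nat.exists_eq_add_of_le ha
        have key : bmon (4 + a') b c = (X 0 ^ 4 : MvPolynomial (Fin 3) ℚ) * bmon a' b c := by
          simp only [bmon]; ring
        rw [key, map_mul, πq_zero hg3mem, zero_mul]
        exact zero_mem _
      rcases le_or_gt 3 b with hb | hb
      · obtain ⟨b', rfl⟩ := Nat.exists_eq_add_of_le hb
        have h0 : πq (bmon a (3+b') c -
            ((bmon (a+1) (2+b') c + bmon (a+1) (2+b') c) -
              (bmon (a+2) (1+b') c + bmon (a+2) (1+b') c))) = 0 := by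
          rw [show bmon a (3+b') c -
              ((bmon (a+1) (2+b') c + bmon (a+1) (2+b') c) -
                (bmon (a+2) (1+b') c + bmon (a+2) (1+b') c))
              = (X 0 ^ a * X 1 ^ b' * X 2 ^ c) *
                (X 1^3 - 2*X 0*X 1^2 + 2*X 0^2*X 1) by simp only [bmon]; ring]
          exact πq_zero (Ideal.mul_mem_left _ _ hg2mem)
        rw [map_sub, sub_eq_zero] at h0
        rw [h0, map_sub, map_add, map_add]
        have m1 := ihb (2 + b') (by omega) (a + 1)
        have m2 := ihb (1 + b') (by omega) (a + 2)
        rw [show a + 1 + (2 + b') + c = a + (3 + b') + c by ring] at m1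
        rw [show a + 2 + (1 + b') + c = a + (3 + b') + c by ring] at m2
        exact sub_mem (add_mem m1 m1) (add_mem m2 m2)
      rcases le_or_gt 2 c with hc | hc
      · obtain ⟨c', rfl⟩ := Nat.exists_eq_add_of_le hc
        have h0 : πq (bmon a b (2+c') -
            (bmon (a+1) (b+1) c' + bmon a (b+1) (1+c') - bmon (a+2) b c' - bmon a (b+2) c')) = 0 := by
          rw [show bmon a b (2+c') -
              (bmon (a+1) (b+1) c' + bmon a (b+1) (1+c') - bmon (a+2) b c' - bmon a (b+2) c')
              = (X 0 ^ a * X 1 ^ b * X 2 ^ c') *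
                (X 0^2 + X 1^2 + X 2^2 - X 0*X 1 - X 1*X 2) by simp only [bmon]; ring]
          exact πq_zero (Ideal.mul_mem_left _ _ hg1mem)
        rw [map_sub, sub_eq_zero] at h0
        rw [h0, map_sub, map_sub, map_add]
        have m1 := ihc c' (by omega) b (a+2)
        have m2 := ihc c' (by omega) (b+2) a
        have m3 := ihc c' (by omega) (b+1) (a+1)
        have m4 := ihc (1+c') (by omega) (b+1) a
        rw [show a+2+b+c' = a+b+(2+c') by ring] at m1
        rw [show a+(b+2)+c' = a+b+(2+c') by ring] at m2
        rw [show a+1+(b+1)+c' = a+b+(2+c') by ring] at m3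
        rw [show a+(b+1)+(1+c') = a+b+(2+c') by ring] at m4
        exact sub_mem (sub_mem (add_mem m3 m4) m1) m2
      · exact Submodule.subset_span
          ⟨(⟨a, by omega⟩, ⟨b, by omega⟩, ⟨c, by omega⟩), rfl, rfl⟩

lemma degree_fin3 (s : Fin 3 →₀ ℕ) : s.degree = s 0 + s 1 + s 2 := by
  rw [Finsupp.degree_apply, Finset.sum_subset (Finset.subset_univ _)
    (fun x _ hx => Finsupp.notMem_support_iff.mp hx), Fin.sum_univ_three]

lemma mono_bmon (s : Fin 3 →₀ ℕ) :
    MvPolynomial.monomial s (1:ℚ) = bmon (s 0) (s 1) (s 2) := by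
  have hs : s = Finsupp.single 0 (s 0) + Finsupp.single 1 (s 1) + Finsupp.single 2 (s 2) := by
    ext i; fin_cases i <;> simp
  rw [bmon, MvPolynomial.X_pow_eq_monomial, MvPolynomial.X_pow_eq_monomial,
    MvPolynomial.X_pow_eq_monomial, monomial_mul, monomial_mul, ← hs, one_mul, one_mul]

lemma bmon_hom (i j k : ℕ) : (bmon i j k).IsHomogeneous (i + j + k) := by
  simpa [bmon] using
    ((isHomogeneous_X_pow (R := ℚ) 0 i).mul (isHomogeneous_X_pow 1 j)).mul
      (isHomogeneous_X_pow 2 k)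

lemma Vd_eq (d : ℕ) :
    (MvPolynomial.homogeneousSubmodule (Fin 3) ℚ d).map
      (Ideal.Quotient.mkₐ ℚ flagRelIdeal).toLinearMap = Wd d := by
  apply le_antisymm
  · rintro _ ⟨p, hp, rfl⟩
    rw [SetLike.mem_coe, mem_homogeneousSubmodule] at hp
    show πq p ∈ Wd d
    rw [← p.support_sum_monomial_coeff, map_sum]
    apply Submodule.sum_mem
    intro s hs
    have hd : s 0 + s 1 + s 2 = d := by
      have hw := hp (mem_support_iff.mp hs)
      have : s.degree = d := by rw [Finsupp.degree_eq_weight_one]; exact hw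
      rwa [degree_fin3] at this
    have : (monomial s) (coeff s p) = (coeff s p) • (monomial s (1:ℚ)) := by
      rw [MvPolynomial.smul_monomial, smul_eq_mul, mul_one]
    rw [this, map_smul]
    apply Submodule.smul_mem
    rw [mono_bmon, ← hd]
    exact red (s 2) (s 1) (s 0)
  · rw [Wd, Submodule.span_le]
    rintro _ ⟨t, ht, rfl⟩
    refine ⟨bmon t.1 t.2.1 t.2.2, ?_, rfl⟩
    rw [SetLike.mem_coe, mem_homogeneousSubmodule, ← ht]
    exact bmon_hom _ _ _

lemma Wd_finrank (d : ℕ) :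
    Module.finrank ℚ (Wd d) = Fintype.card {t : Fin 4 × Fin 3 × Fin 2 // degT t = d} := by
  have h1 : Wd d = Submodule.span ℚ (Set.range fun t : {t // degT t = d} => vR t.1) := by
    rw [Wd]; congr 1; exact Set.image_eq_range _ _
  rw [h1]
  exact finrank_span_eq_card (vR_indep.comp Subtype.val Subtype.val_injective)

lemma span_vR_top : Submodule.span ℚ (Set.range vR) = ⊤ := by
  rw [Submodule.eq_top_iff']
  intro x
  obtain ⟨p, rfl⟩ := Ideal.Quotient.mkₐ_surjective ℚ flagRelIdeal x
  show πq p ∈ _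
  rw [← p.sum_homogeneousComponent, map_sum]
  apply Submodule.sum_mem
  intro i _
  have h1 : πq (homogeneousComponent i p) ∈ Wd i := by
    rw [← Vd_eq]
    exact ⟨_, homogeneousComponent_isHomogeneous i p, rfl⟩
  exact Submodule.span_mono (by rintro _ ⟨t, _, rfl⟩; exact ⟨t, rfl⟩) h1

/-- The Hilbert series of
`R = ℚ[y₁,y₁₂,y₁₂₃]/(y₁²+y₁₂²+y₁₂₃²-y₁y₁₂-y₁₂y₁₂₃, y₁₂³-2y₁y₁₂²+2y₁²y₁₂, y₁⁴)`
(variables in degree 1) is `1+3t+5t²+6t³+5t⁴+3t⁵+t⁶`; in particular `R` has total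
dimension `24` over `ℚ`.  The degree-`d` graded piece of `R` is the image of the
homogeneous polynomials of degree `d` under the quotient map. -/
theorem flag_ring_hilbert_series :
    (∀ d : ℕ,
      Module.finrank ℚ
        ((MvPolynomial.homogeneousSubmodule (Fin 3) ℚ d).map
          (Ideal.Quotient.mkₐ ℚ flagRelIdeal).toLinearMap) =
      ((1 + 3 * Polynomial.X + 5 * Polynomial.X ^ 2 + 6 * Polynomial.X ^ 3 +
        5 * Polynomial.X ^ 4 + 3 * Polynomial.X ^ 5 +
        Polynomial.X ^ 6 : Polynomial ℕ)).coeff d) ∧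
    Module.finrank ℚ (MvPolynomial (Fin 3) ℚ ⧸ flagRelIdeal) = 24 := by
  constructor
  · intro d
    rw [Vd_eq, Wd_finrank]
    rcases lt_or_ge d 7 with hd | hd
    · interval_cases d <;>
        norm_num [Polynomial.coeff_add, Polynomial.coeff_one, Polynomial.coeff_X_pow,
          Polynomial.coeff_X, Polynomial.coeff_ofNat_mul] <;> decide
    · have hempty : IsEmpty {t : Fin 4 × Fin 3 × Fin 2 // degT t = d} := by
        refine ⟨fun t => ?_⟩
        obtain ⟨⟨i, j, k⟩, ht⟩ := t
        simp only [degT] at ht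
        have h1 := i.isLt
        have h2 := j.isLt
        have h3 := k.isLt
        omega
      rw [Fintype.card_eq_zero]
      symm
      simp only [Polynomial.coeff_add, Polynomial.coeff_one, Polynomial.coeff_X_pow,
        Polynomial.coeff_X, Polynomial.coeff_ofNat_mul]
      have h0 : d ≠ 0 := by omega
      have h1 : ¬ d = 1 := by omega
      have h2 : ¬ d = 2 := by omega
      have h3 : ¬ d = 3 := by omega
      have h4 : ¬ d = 4 := by omega
      have h5 : ¬ d = 5 := by omega
      have h6 : ¬ d = 6 := by omega
      simp [if_neg, h0, h1, h2, h3, h4, h5, h6, Ne.symm h1]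
  · rw [← finrank_top, ← span_vR_top, finrank_span_eq_card vR_indep]
    simp

end
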